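/- arXiv:1401.1444 — 2 statements merged into one kernel-verified Lean document; each statement's English description precedes it below -/
import Mathlib

section
/- Let r and s be positive integers with r \equiv 0 (mod 3) and s \equiv 4 (mod 6). For a nonnegative integer n, let t be the number of digits equal to 1 in the 3-adic expansion of n, let o_1 be the number of occurrences of the string 11 and o_2 the number of occurrences of the string 21. Then: a_n(r,s) \equiv 1 (mod 9) iff t is even and o_1 - o_2 \equiv 0 (mod 3); a_n(r,s) \equiv 4 (mod 9) iff t is even and o_1 - o_2 \equiv 1 (mod 3); a_n(r,s) \equiv 7 (mod 9) iff t is even and o_1 - o_2 \equiv 2 (mod 3); a_n(r,s) \equiv 8 (mod 9) iff t is odd and o_1 - o_2 \equiv 0 (mod 3); a_n(r,s) \equiv 5 (mod 9) iff t is odd and o_1 - o_2 \equiv 1 (mod 3); a_n(r,s) \equiv 2 (mod 9) iff t is odd and o_1 - o_2 \equiv 2 (mod 3); and a_n(r,s) is never \equiv 3 or 6 (mod 9). -/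
open Finset

/-- The generalised Apéry numbers `a_n(r,s) = ∑_{k=0}^n C(n,k)^r C(n+k,k)^s`. -/
def apery (r s n : ℕ) : ℕ :=
  ∑ k ∈ Finset.range (n + 1), n.choose k ^ r * (n + k).choose k ^ s

/-- The number of digits among `d 0, …, d m` equal to `v`. -/
def digitCount (d : ℕ → ℕ) (m v : ℕ) : ℕ :=
  ((Finset.range (m + 1)).filter fun i => d i = v).card

/-- The number of occurrences of the string `ab` in the 3-adic expansion with digits
`d 0, …, d m` (using the convention that digits above position `m` are zero): indices `ν`
with `1 ≤ ν ≤ m + 1`, `d ν = a` and `d (ν - 1) = b`. -/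
def occ (d : ℕ → ℕ) (m a b : ℕ) : ℕ :=
  ((Finset.Icc 1 (m + 1)).filter fun ν => d ν = a ∧ d (ν - 1) = b).card

/-- The 3-adic expansion of `n` (digits `d 0, …, d m`) has exactly one occurrence of the
string `ab`, and all digits not belonging to this occurrence are `0` or `2`. -/
def uniqueOcc (d : ℕ → ℕ) (m a b : ℕ) : Prop :=
  occ d m a b = 1 ∧
  ∀ ν ∈ Finset.Icc 1 (m + 1), (d ν = a ∧ d (ν - 1) = b) →
    ∀ i ≤ m, i ≠ ν → i ≠ ν - 1 → (d i = 0 ∨ d i = 2)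

namespace AperyAux
lemma h9 : (9 : ZMod 9) = 0 := by decide

/-- product of the non-multiples of 3 in `(3A+u)!` -/
def Gf (A u : ℕ) : ℕ :=
  (∏ j ∈ Finset.range A, ((3*j+1)*(3*j+2))) * ∏ t ∈ Finset.range u, (3*A+1+t)

lemma fact3 (A : ℕ) {u : ℕ} (hu : u ≤ 2) :
    (3*A+u).factorial = 3^A * A.factorial * Gf A u := by
  have h0 : ∀ B : ℕ, (3*B).factorial = 3^B * B.factorial * Gf B 0 := by
    intro B
    induction B with
    | zero => simp [Gf]
    | succ B ih =>
      have h1 : 3*(B+1) = 3*B + 1 + 1 + 1 := by ring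
      rw [h1, Nat.factorial_succ, Nat.factorial_succ, Nat.factorial_succ, ih,
        Nat.factorial_succ]
      unfold Gf
      simp only [Finset.prod_range_succ, Finset.range_zero, Finset.prod_empty, mul_one]
      ring
  interval_cases u
  · simpa using h0 A
  · have : 3*A+1 = (3*A) + 1 := by ring
    rw [this, Nat.factorial_succ, h0]
    unfold Gf
    simp only [Finset.prod_range_succ, Finset.range_zero, Finset.range_one,
      Finset.prod_empty, Finset.prod_singleton, mul_one, add_zero]
    ring
  · have : 3*A+2 = (3*A) + 1 + 1 := by ring
    rw [this, Nat.factorial_succ, Nat.factorial_succ, h0]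
    unfold Gf
    simp only [Finset.prod_range_succ, Finset.range_zero, Finset.prod_empty, mul_one]
    ring

lemma keyNat (B C : ℕ) {u v w : ℕ} (hvw : v + w = u) (hu : u ≤ 2) :
    ((3*(B+C)+u).choose (3*B+v)) * (Gf B v * Gf C w)
      = (B+C).choose B * Gf (B+C) u := by
  have hv2 : v ≤ 2 := by omega
  have hw2 : w ≤ 2 := by omega
  have hle : 3*B+v ≤ 3*(B+C)+u := by omega
  have e1 := Nat.choose_mul_factorial_mul_factorial hle
  have hsub : 3*(B+C)+u - (3*B+v) = 3*C+w := by omega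
  rw [hsub] at e1
  have e2 := Nat.choose_mul_factorial_mul_factorial (Nat.le_add_right B C)
  have hsub2 : B + C - B = C := by omega
  rw [hsub2] at e2
  have E1 : ((3*(B+C)+u).choose (3*B+v) : ℤ) * (3*B+v).factorial * (3*C+w).factorial
      = ((3*(B+C)+u).factorial : ℤ) := by exact_mod_cast congrArg (Nat.cast (R := ℤ)) e1
  have E2 : ((B+C).choose B : ℤ) * B.factorial * C.factorial
      = ((B+C).factorial : ℤ) := by exact_mod_cast congrArg (Nat.cast (R := ℤ)) e2
  have F1 : ((3*(B+C)+u).factorial : ℤ) = 3^(B+C) * (B+C).factorial * Gf (B+C) u := by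
    exact_mod_cast congrArg (Nat.cast (R := ℤ)) (fact3 (B+C) hu)
  have F2 : ((3*B+v).factorial : ℤ) = 3^B * B.factorial * Gf B v := by
    exact_mod_cast congrArg (Nat.cast (R := ℤ)) (fact3 B hv2)
  have F3 : ((3*C+w).factorial : ℤ) = 3^C * C.factorial * Gf C w := by
    exact_mod_cast congrArg (Nat.cast (R := ℤ)) (fact3 C hw2)
  rw [F1, F2, F3, ← E2] at E1
  have key : (((3*(B+C)+u).choose (3*B+v) : ℤ)) * (Gf B v * Gf C w)
      = ((B+C).choose B : ℤ) * Gf (B+C) u := by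
    have hpos : ((3:ℤ)^B * 3^C * (B.factorial * C.factorial)) ≠ 0 := by positivity
    apply mul_left_cancel₀ hpos
    linear_combination E1
  exact_mod_cast key
lemma GfVal0 (A : ℕ) : ((Gf A 0 : ℕ) : ZMod 9) = 2^A := by
  unfold Gf
  push_cast
  simp only [Finset.range_zero, Finset.prod_empty, mul_one]
  rw [show (2:ZMod 9)^A = ∏ _j ∈ Finset.range A, (2:ZMod 9) by
    rw [Finset.prod_const, Finset.card_range]]
  refine Finset.prod_congr rfl fun j _ => ?_
  linear_combination ((j:ZMod 9)^2 + j) * h9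

lemma GfVal1 (A : ℕ) : ((Gf A 1 : ℕ) : ZMod 9) = 2^A * (1 + 3*(A : ZMod 9)) := by
  have h : Gf A 1 = Gf A 0 * (3*A+1) := by
    unfold Gf
    simp [Finset.prod_range_succ]
  rw [h]
  push_cast
  rw [GfVal0]
  ring

lemma GfVal2 (A : ℕ) : ((Gf A 2 : ℕ) : ZMod 9) = 2^A * 2 := by
  have h : Gf A 2 = Gf A 0 * ((3*A+1) * (3*A+2)) := by
    unfold Gf
    simp [Finset.prod_range_succ]
  rw [h]
  push_cast
  rw [GfVal0]
  linear_combination (2^A * ((A:ZMod 9)^2 + A)) * h9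
lemma u13 (a : ZMod 9) : (1+3*a)*(1-3*a) = 1 := by linear_combination (-(a^2))*h9

lemma keyZ (B C : ℕ) {u v w : ℕ} (hvw : v + w = u) (hu : u ≤ 2)
    (tB tC tA : ZMod 9) (hB : ((Gf B v : ℕ) : ZMod 9) = 2^B * tB)
    (hC : ((Gf C w : ℕ) : ZMod 9) = 2^C * tC)
    (hA : ((Gf (B+C) u : ℕ) : ZMod 9) = 2^(B+C) * tA) :
    (((3*(B+C)+u).choose (3*B+v) : ℕ) : ZMod 9) * (tB * tC)
      = (((B+C).choose B : ℕ) : ZMod 9) * tA := by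
  have K := congrArg (Nat.cast (R := ZMod 9)) (keyNat B C hvw hu)
  push_cast at K
  rw [hB, hC, hA] at K
  have hple : (2:ZMod 9)^(B+C) * 5^(B+C) = 1 := by
    rw [← mul_pow, show ((2:ZMod 9)*5) = 1 from by decide, one_pow]
  set X := (((3*(B+C)+u).choose (3*B+v) : ℕ) : ZMod 9) with hX
  set Y := (((B+C).choose B : ℕ) : ZMod 9) with hY
  calc X * (tB*tC) = X*(tB*tC)*(2^(B+C)*5^(B+C)) := by rw [hple, mul_one]
    _ = (X * (2^B*tB*(2^C*tC))) * 5^(B+C) := by ring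
    _ = (Y * (2^(B+C)*tA)) * 5^(B+C) := by rw [K]
    _ = Y*tA*(2^(B+C)*5^(B+C)) := by ring
    _ = Y*tA := by rw [hple, mul_one]

lemma cc00 (B C : ℕ) :
    (((3*(B+C)).choose (3*B) : ℕ) : ZMod 9) = (((B+C).choose B : ℕ) : ZMod 9) := by
  have K := keyZ B C (u := 0) (v := 0) (w := 0) rfl (by norm_num) 1 1 1
    (by rw [GfVal0, mul_one]) (by rw [GfVal0, mul_one]) (by rw [GfVal0, mul_one])
  simp only [add_zero] at K
  simpa using K

lemma cc10 (B C : ℕ) :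
    (((3*(B+C)+1).choose (3*B) : ℕ) : ZMod 9)
      = (((B+C).choose B : ℕ) : ZMod 9) * (1 + 3*(B : ZMod 9)) := by
  have K := keyZ B C (u := 1) (v := 0) (w := 1) rfl (by norm_num)
    1 (1+3*(C : ZMod 9)) (1+3*((B:ZMod 9)+(C:ZMod 9)))
    (by rw [GfVal0, mul_one]) (by rw [GfVal1]) (by rw [GfVal1]; push_cast; ring)
  simp only [add_zero] at K
  set X := (((3*(B+C)+1).choose (3*B) : ℕ) : ZMod 9) with hX
  set Y := (((B+C).choose B : ℕ) : ZMod 9) with hY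
  have h2 : X = Y * (1+3*((B:ZMod 9)+C)) * (1-3*(C:ZMod 9)) := by
    calc X = X * (1*(1+3*(C:ZMod 9))) * (1-3*(C:ZMod 9)) := by
          linear_combination (X*(C:ZMod 9)^2) * h9
      _ = Y * (1+3*((B:ZMod 9)+C)) * (1-3*(C:ZMod 9)) := by rw [K]
  rw [h2]
  linear_combination (-Y*((C:ZMod 9)^2 + (B:ZMod 9)*C)) * h9

lemma cc11 (B C : ℕ) :
    (((3*(B+C)+1).choose (3*B+1) : ℕ) : ZMod 9)
      = (((B+C).choose B : ℕ) : ZMod 9) * (1 + 3*(C : ZMod 9)) := by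
  have K := keyZ B C (u := 1) (v := 1) (w := 0) rfl (by norm_num)
    (1+3*(B : ZMod 9)) 1 (1+3*((B:ZMod 9)+(C:ZMod 9)))
    (by rw [GfVal1]) (by rw [GfVal0, mul_one]) (by rw [GfVal1]; push_cast; ring)
  set X := (((3*(B+C)+1).choose (3*B+1) : ℕ) : ZMod 9) with hX
  set Y := (((B+C).choose B : ℕ) : ZMod 9) with hY
  have h2 : X = Y * (1+3*((B:ZMod 9)+C)) * (1-3*(B:ZMod 9)) := by
    calc X = X * ((1+3*(B:ZMod 9))*1) * (1-3*(B:ZMod 9)) := by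
          linear_combination (X*(B:ZMod 9)^2) * h9
      _ = Y * (1+3*((B:ZMod 9)+C)) * (1-3*(B:ZMod 9)) := by rw [K]
  rw [h2]
  linear_combination (-Y*((B:ZMod 9)^2 + (B:ZMod 9)*C)) * h9

lemma cc20 (B C : ℕ) :
    (((3*(B+C)+2).choose (3*B) : ℕ) : ZMod 9) = (((B+C).choose B : ℕ) : ZMod 9) := by
  have K := keyZ B C (u := 2) (v := 0) (w := 2) rfl (by norm_num) 1 2 2
    (by rw [GfVal0, mul_one]) (by rw [GfVal2]) (by rw [GfVal2])
  simp only [add_zero] at K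
  set X := (((3*(B+C)+2).choose (3*B) : ℕ) : ZMod 9) with hX
  set Y := (((B+C).choose B : ℕ) : ZMod 9) with hY
  calc X = X * (1*2) * 5 := by linear_combination (-X) * h9
    _ = Y * 2 * 5 := by rw [K]
    _ = Y := by linear_combination Y * h9

lemma cc21 (B C : ℕ) :
    (((3*(B+C)+2).choose (3*B+1) : ℕ) : ZMod 9)
      = (((B+C).choose B : ℕ) : ZMod 9) * (2 + 3*((B:ZMod 9)+(C:ZMod 9))) := by
  have K := keyZ B C (u := 2) (v := 1) (w := 1) rfl (by norm_num)
    (1+3*(B : ZMod 9)) (1+3*(C : ZMod 9)) 2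
    (by rw [GfVal1]) (by rw [GfVal1]) (by rw [GfVal2])
  set X := (((3*(B+C)+2).choose (3*B+1) : ℕ) : ZMod 9) with hX
  set Y := (((B+C).choose B : ℕ) : ZMod 9) with hY
  have h2 : X = Y * 2 * ((1-3*(B:ZMod 9))*(1-3*(C:ZMod 9))) := by
    calc X = X * ((1+3*(B:ZMod 9))*(1+3*(C:ZMod 9))) * ((1-3*(B:ZMod 9))*(1-3*(C:ZMod 9))) := by
          linear_combination (X*((B:ZMod 9)^2 + (C:ZMod 9)^2 - 9*(B:ZMod 9)^2*(C:ZMod 9)^2)) * h9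
      _ = Y * 2 * ((1-3*(B:ZMod 9))*(1-3*(C:ZMod 9))) := by rw [K]
  rw [h2]
  linear_combination (Y*(2*(B:ZMod 9)*C - (B:ZMod 9) - (C:ZMod 9))) * h9

lemma cc22 (B C : ℕ) :
    (((3*(B+C)+2).choose (3*B+2) : ℕ) : ZMod 9) = (((B+C).choose B : ℕ) : ZMod 9) := by
  have K := keyZ B C (u := 2) (v := 2) (w := 0) rfl (by norm_num) 2 1 2
    (by rw [GfVal2]) (by rw [GfVal0, mul_one]) (by rw [GfVal2])
  set X := (((3*(B+C)+2).choose (3*B+2) : ℕ) : ZMod 9) with hX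
  set Y := (((B+C).choose B : ℕ) : ZMod 9) with hY
  calc X = X * (2*1) * 5 := by linear_combination (-X) * h9
    _ = Y * 2 * 5 := by rw [K]
    _ = Y := by linear_combination Y * h9

lemma kill {u v : ℕ} (A B : ℕ) (hu : u < 3) (hv : v < 3) (huv : u < v) :
    (3:ℕ) ∣ (3*A+u).choose (3*B+v) := by
  haveI : Fact (Nat.Prime 3) := ⟨by norm_num⟩
  have h := Choose.choose_modEq_choose_mod_mul_choose_div_nat (p := 3) (n := 3*A+u) (k := 3*B+v)
  have h1 : (3*A+u) % 3 = u := by omega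
  have h2 : (3*B+v) % 3 = v := by omega
  have h3 : (3*A+u) / 3 = A := by omega
  have h4 : (3*B+v) / 3 = B := by omega
  rw [h1, h2, h3, h4, Nat.choose_eq_zero_of_lt huv, zero_mul] at h
  exact (Nat.modEq_zero_iff_dvd).mp h

lemma killpow {e x : ℕ} (he : 2 ≤ e) (hx : (3:ℕ) ∣ x) : ((x : ℕ) : ZMod 9)^e = 0 := by
  rw [← Nat.cast_pow]
  refine (ZMod.natCast_eq_zero_iff _ _).mpr ?_
  obtain ⟨y, rfl⟩ := hx
  calc (9:ℕ) ∣ (3*y)^2 := ⟨y^2, by ring⟩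
    _ ∣ (3*y)^e := pow_dvd_pow _ he

lemma pow13_3 (a : ZMod 9) : (1+3*a)^3 = 1 := by
  linear_combination (a + 3*a^2 + 3*a^3) * h9

lemma pow13r {r : ℕ} (hr3 : r % 3 = 0) (a : ZMod 9) : (1+3*a)^r = 1 := by
  calc (1+3*a)^r = ((1+3*a)^3)^(r/3) := by rw [← pow_mul]; congr 1; omega
    _ = 1 := by rw [pow13_3, one_pow]

lemma pow13s {s : ℕ} (hs6 : s % 6 = 4) (a : ZMod 9) : (1+3*a)^s = 1+3*a := by
  have h6 : (1+3*a)^6 = 1 := by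
    rw [show (6:ℕ) = 3*2 from rfl, pow_mul, pow13_3, one_pow]
  calc (1+3*a)^s = ((1+3*a)^6)^(s/6) * (1+3*a)^4 := by rw [← pow_mul, ← pow_add]; congr 1; omega
    _ = (1+3*a)^4 := by rw [h6, one_pow, one_mul]
    _ = (1+3*a)^3 * (1+3*a) := by ring
    _ = 1+3*a := by rw [pow13_3, one_mul]

lemma pow2s {s : ℕ} (hs6 : s % 6 = 4) : (2:ZMod 9)^s = 7 := by
  have h6 : (2:ZMod 9)^6 = 1 := by decide
  calc (2:ZMod 9)^s = ((2:ZMod 9)^6)^(s/6) * 2^4 := by rw [← pow_mul, ← pow_add]; congr 1; omega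
    _ = 2^4 := by rw [h6, one_pow, one_mul]
    _ = 7 := by decide

lemma pow23s {s : ℕ} (hs6 : s % 6 = 4) (a : ZMod 9) : (2+3*a)^s = 7 + 6*a := by
  have he : (2+3*a) = 2*(1+3*(5*a)) := by linear_combination (-3*a)*h9
  rw [he, mul_pow, pow2s hs6, pow13s hs6]
  linear_combination (11*a)*h9

lemma apery_ext {r s : ℕ} (hr : 0 < r) (n e : ℕ) (hne : n < e) :
    (apery r s n : ℕ) = ∑ k ∈ Finset.range e, n.choose k ^ r * (n+k).choose k ^ s := by
  rw [apery]
  apply Finset.sum_subset (Finset.range_subset_range.mpr (by omega))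
  intro k hk hk2
  have : n < k := by simp only [Finset.mem_range] at hk hk2; omega
  rw [Nat.choose_eq_zero_of_lt this, zero_pow (by omega), zero_mul]

lemma split3 {M : Type*} [AddCommMonoid M] (f : ℕ → M) (q : ℕ) :
    ∑ k ∈ Finset.range (3*q+3), f k
      = ∑ j ∈ Finset.range (q+1), (f (3*j) + f (3*j+1) + f (3*j+2)) := by
  induction q with
  | zero => simp [Finset.sum_range_succ]
  | succ q ih =>
    rw [show 3*(q+1)+3 = (3*q+3) + 1 + 1 + 1 from by ring]
    rw [Finset.sum_range_succ, Finset.sum_range_succ, Finset.sum_range_succ, ih]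
    rw [Finset.sum_range_succ (n := q+1)]
    rw [show 3*q+3+1+1 = 3*(q+1)+2 from by ring, show 3*q+3+1 = 3*(q+1)+1 from by ring,
        show 3*q+3 = 3*(q+1) from by ring]
    abel

lemma aperyZ {r s : ℕ} (q : ℕ) :
    ((apery r s q : ℕ) : ZMod 9)
      = ∑ j ∈ Finset.range (q+1), ((q.choose j : ℕ) : ZMod 9)^r * (((q+j).choose j : ℕ) : ZMod 9)^s := by
  rw [apery]
  push_cast
  rfl

lemma rec1 {r s : ℕ} (hr : 0 < r) (hr3 : r % 3 = 0) (hs6 : s % 6 = 4) (q : ℕ) :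
    ((apery r s (3*q+1) : ℕ) : ZMod 9)
      = (8 + 6*(q : ZMod 9)) * ((apery r s q : ℕ) : ZMod 9) := by
  have hrw := apery_ext (s := s) hr (3*q+1) (3*q+3) (by omega)
  rw [hrw, split3, aperyZ, Finset.mul_sum]
  push_cast
  refine Finset.sum_congr rfl fun j hj => ?_
  have hj' : j < q + 1 := Finset.mem_range.mp hj
  obtain ⟨c, rfl⟩ : ∃ c, q = j + c := ⟨q - j, by omega⟩
  rw [show 3*(j+c)+1+3*j = 3*(j+(c+j))+1 from by ring,
      show 3*(j+c)+1+(3*j+1) = 3*(j+(c+j))+2 from by ring,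
      show j+c+j = j+(c+j) from by ring]
  rw [cc10 j c, cc10 j (c+j), cc11 j c, cc21 j (c+j)]
  rw [killpow (by omega) (kill (u := 1) (v := 2) (j+c) j (by omega) (by omega) (by omega)), zero_mul, add_zero]
  rw [mul_pow, mul_pow, mul_pow, mul_pow,
      pow13r hr3, pow13s hs6, pow13r hr3, pow23s hs6]
  push_cast
  linear_combination ((((j+c).choose j : ℕ) : ZMod 9)^r
    * (((j+(c+j)).choose j : ℕ) : ZMod 9)^s * (j : ZMod 9)) * h9

lemma rec0 {r s : ℕ} (hr : 0 < r) (hr3 : r % 3 = 0) (hs6 : s % 6 = 4) (q : ℕ) :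
    ((apery r s (3*q) : ℕ) : ZMod 9) = ((apery r s q : ℕ) : ZMod 9) := by
  have hrw := apery_ext (s := s) hr (3*q) (3*q+3) (by omega)
  rw [hrw, split3, aperyZ]
  push_cast
  refine Finset.sum_congr rfl fun j hj => ?_
  have hj' : j < q + 1 := Finset.mem_range.mp hj
  obtain ⟨c, rfl⟩ : ∃ c, q = j + c := ⟨q - j, by omega⟩
  rw [show (3*(j+c)).choose (3*j+1) = (3*(j+c)+0).choose (3*j+1) from by simp,
      show (3*(j+c)).choose (3*j+2) = (3*(j+c)+0).choose (3*j+2) from by simp]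
  rw [killpow (by omega) (kill (u := 0) (v := 1) (j+c) j (by omega) (by omega) (by omega)),
      zero_mul,
      killpow (by omega) (kill (u := 0) (v := 2) (j+c) j (by omega) (by omega) (by omega)),
      zero_mul, add_zero, add_zero]
  rw [show 3*(j+c)+3*j = 3*(j+(c+j)) from by ring,
      show j+c+j = j+(c+j) from by ring]
  rw [cc00 j c, cc00 j (c+j)]

lemma rec2 {r s : ℕ} (hr : 0 < r) (hr3 : r % 3 = 0) (hs6 : s % 6 = 4) (q : ℕ) :
    ((apery r s (3*q+2) : ℕ) : ZMod 9) = ((apery r s q : ℕ) : ZMod 9) := by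
  have hrw := apery_ext (s := s) hr (3*q+2) (3*q+3) (by omega)
  rw [hrw, split3, aperyZ]
  push_cast
  refine Finset.sum_congr rfl fun j hj => ?_
  have hj' : j < q + 1 := Finset.mem_range.mp hj
  obtain ⟨c, rfl⟩ : ∃ c, q = j + c := ⟨q - j, by omega⟩
  -- second summand: (3(j+c)+2 + (3j+1)) = 3(j+(c+j)+1) + 0, kill since 0 < 1
  rw [show 3*(j+c)+2+(3*j+1) = 3*(j+(c+j)+1)+0 from by ring,
      show 3*(j+c)+2+(3*j+2) = 3*(j+(c+j)+1)+1 from by ring,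
      show 3*(j+c)+2+3*j = 3*(j+(c+j))+2 from by ring,
      show j+c+j = j+(c+j) from by ring]
  rw [killpow (by omega) (kill (u := 0) (v := 1) (j+(c+j)+1) j (by omega) (by omega) (by omega)),
      mul_zero,
      killpow (by omega) (kill (u := 1) (v := 2) (j+(c+j)+1) j (by omega) (by omega) (by omega)),
      mul_zero, add_zero, add_zero]
  rw [cc20 j c, cc20 j (c+j)]

lemma occ_card (d : ℕ → ℕ) (m a b : ℕ) :
    occ d m a b = ((Finset.range (m+1)).filter (fun i => d (i+1) = a ∧ d i = b)).card := by
  rw [occ]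
  apply Finset.card_nbij' (fun ν => ν - 1) (fun i => i + 1)
  · intro ν hν
    simp only [Finset.mem_coe, Finset.mem_filter, Finset.mem_Icc, Finset.mem_range] at hν ⊢
    obtain ⟨⟨h1, h2⟩, h3, h4⟩ := hν
    refine ⟨by omega, ?_, h4⟩
    rw [show ν - 1 + 1 = ν from by omega]; exact h3
  · intro i hi
    simp only [Finset.mem_coe, Finset.mem_filter, Finset.mem_Icc, Finset.mem_range] at hi ⊢
    obtain ⟨h1, h2, h3⟩ := hi
    refine ⟨⟨by omega, by omega⟩, h2, ?_⟩
    simpa using h3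
  · intro ν hν
    simp only [Finset.mem_coe, Finset.mem_filter, Finset.mem_Icc] at hν ⊢
    omega
  · intro i _
    dsimp only
    omega

lemma digitCount_shift (d : ℕ → ℕ) (m v : ℕ) :
    digitCount d (m+1) v
      = digitCount (fun i => d (i+1)) m v + (if d 0 = v then 1 else 0) := by
  unfold digitCount
  rw [Finset.card_filter, Finset.card_filter, Finset.sum_range_succ']

lemma occ_shift (d : ℕ → ℕ) (m a b : ℕ) :
    occ d (m+1) a b
      = occ (fun i => d (i+1)) m a b + (if d 1 = a ∧ d 0 = b then 1 else 0) := by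
  rw [occ_card, occ_card, Finset.card_filter, Finset.card_filter, Finset.sum_range_succ']

lemma digitCount_zero (d : ℕ → ℕ) (v : ℕ) :
    digitCount d 0 v = if d 0 = v then 1 else 0 := by
  unfold digitCount
  rw [Finset.card_filter, Finset.sum_range_one]

lemma occ_zeroth (d : ℕ → ℕ) (a b : ℕ) :
    occ d 0 a b = if d 1 = a ∧ d 0 = b then 1 else 0 := by
  rw [occ_card, Finset.card_filter, Finset.sum_range_one]
lemma apery_zero {r s : ℕ} : apery r s 0 = 1 := by simp [apery]

lemma main {r s : ℕ} (hr : 0 < r) (hr3 : r % 3 = 0) (hs6 : s % 6 = 4) :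
    ∀ (m : ℕ) (d : ℕ → ℕ), (∀ i, d i ≤ 2) → (∀ i, m < i → d i = 0) →
    ((apery r s (∑ i ∈ Finset.range (m+1), d i * 3^i) : ℕ) : ZMod 9)
      = (-1)^(digitCount d m 1) * 4^(occ d m 1 1) * 7^(occ d m 2 1) := by
  have ha0 : ((apery r s 0 : ℕ) : ZMod 9) = 1 := by rw [apery_zero]; norm_num
  have ha1 : ((apery r s 1 : ℕ) : ZMod 9) = 8 := by
    have h := rec1 hr hr3 hs6 0
    norm_num [ha0] at h
    exact h
  have ha2 : ((apery r s 2 : ℕ) : ZMod 9) = 1 := by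
    have h := rec2 hr hr3 hs6 0
    norm_num [ha0] at h
    exact h
  intro m
  induction m with
  | zero =>
    intro d hd2 hd0
    have hd1 : d 1 = 0 := hd0 1 (by omega)
    simp only [show (0:ℕ)+1 = 1 from rfl, Finset.range_one, Finset.sum_singleton, pow_zero,
      mul_one]
    rw [digitCount_zero, occ_zeroth, occ_zeroth, hd1]
    rcases (show d 0 = 0 ∨ d 0 = 1 ∨ d 0 = 2 from by have := hd2 0; omega) with h|h|h <;>
      rw [h]
    · rw [ha0]; norm_num
    · rw [ha1]; norm_num; decide
    · rw [ha2]; norm_num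
  | succ m ih =>
    intro d hd2 hd0
    have hS : ∑ i ∈ Finset.range (m+1+1), d i * 3^i
        = 3 * (∑ i ∈ Finset.range (m+1), d (i+1) * 3^i) + d 0 := by
      rw [Finset.sum_range_succ', Finset.mul_sum]
      congr 1
      · exact Finset.sum_congr rfl fun i _ => by ring
      · simp
    have ihq := ih (fun i => d (i+1)) (fun i => hd2 _) (fun i hi => hd0 _ (by omega))
    set q := ∑ i ∈ Finset.range (m+1), d (i+1) * 3^i with hq
    rw [hS, digitCount_shift, occ_shift, occ_shift]
    rcases (show d 0 = 0 ∨ d 0 = 1 ∨ d 0 = 2 from by have := hd2 0; omega) with h|h|h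
    · rw [h]
      simp only [Nat.add_zero]
      rw [rec0 hr hr3 hs6 q, ihq]
      rw [if_neg (show ¬((0:ℕ) = 1) from by omega), if_neg (by simp), if_neg (by simp)]
      simp
    · rw [h, rec1 hr hr3 hs6 q, ihq]
      have hqd : (6 : ZMod 9) * ((q : ℕ) : ZMod 9) = 6 * ((d 1 : ℕ) : ZMod 9) := by
        have hq1 : q = d 1 + 3 * (∑ i ∈ Finset.range m, d (i+1+1) * 3^i) := by
          rw [hq, Finset.sum_range_succ', Finset.mul_sum, add_comm]
          congr 1
          · simp
          · exact Finset.sum_congr rfl fun i _ => by ring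
        rw [hq1]
        push_cast
        linear_combination (2 * ∑ x ∈ Finset.range m, ((d (x+1+1) : ℕ) : ZMod 9) * 3^x) * h9
      rw [if_pos rfl]
      set t := digitCount (fun i => d (i+1)) m 1 with ht
      set o1 := occ (fun i => d (i+1)) m 1 1 with ho1
      set o2 := occ (fun i => d (i+1)) m 2 1 with ho2
      rcases (show d 1 = 0 ∨ d 1 = 1 ∨ d 1 = 2 from by have := hd2 1; omega) with h1|h1|h1
      · rw [if_neg (by simp [h1]), if_neg (by simp [h1])]
        have h6q : (6 : ZMod 9) * ((q : ℕ) : ZMod 9) = 0 := by rw [hqd, h1]; norm_num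
        linear_combination ((-1:ZMod 9)^t * 4^o1 * 7^o2) * h6q
          + ((-1:ZMod 9)^t * 4^o1 * 7^o2) * h9
      · rw [if_pos ⟨h1, rfl⟩, if_neg (by simp [h1])]
        have h6q : (6 : ZMod 9) * ((q : ℕ) : ZMod 9) = 6 := by rw [hqd, h1]; norm_num
        linear_combination ((-1:ZMod 9)^t * 4^o1 * 7^o2) * h6q
          + (2 * (-1:ZMod 9)^t * 4^o1 * 7^o2) * h9
      · rw [if_neg (by simp [h1]), if_pos ⟨h1, rfl⟩]
        have h6q : (6 : ZMod 9) * ((q : ℕ) : ZMod 9) = 12 := by rw [hqd, h1]; norm_num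
        linear_combination ((-1:ZMod 9)^t * 4^o1 * 7^o2) * h6q
          + (3 * (-1:ZMod 9)^t * 4^o1 * 7^o2) * h9
    · rw [h, rec2 hr hr3 hs6 q, ihq]
      rw [if_neg (show ¬((2:ℕ) = 1) from by omega), if_neg (by simp), if_neg (by simp)]
      simp

lemma endgame (x t o1 o2 : ℕ)
    (hx : ((x : ℕ) : ZMod 9) = (-1)^t * 4^o1 * 7^o2) :
    (x ≡ 1 [MOD 9] ↔ Even t ∧ ((o1 : ℤ) - (o2 : ℤ)) % 3 = 0) ∧
    (x ≡ 4 [MOD 9] ↔ Even t ∧ ((o1 : ℤ) - (o2 : ℤ)) % 3 = 1) ∧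
    (x ≡ 7 [MOD 9] ↔ Even t ∧ ((o1 : ℤ) - (o2 : ℤ)) % 3 = 2) ∧
    (x ≡ 8 [MOD 9] ↔ Odd t ∧ ((o1 : ℤ) - (o2 : ℤ)) % 3 = 0) ∧
    (x ≡ 5 [MOD 9] ↔ Odd t ∧ ((o1 : ℤ) - (o2 : ℤ)) % 3 = 1) ∧
    (x ≡ 2 [MOD 9] ↔ Odd t ∧ ((o1 : ℤ) - (o2 : ℤ)) % 3 = 2) ∧
    ¬ (x ≡ 3 [MOD 9]) ∧
    ¬ (x ≡ 6 [MOD 9]) := by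
  have modiff : ∀ c : ℕ, (x ≡ c [MOD 9]) ↔ ((x:ℕ) : ZMod 9) = ((c:ℕ) : ZMod 9) :=
    fun c => (ZMod.natCast_eq_natCast_iff x c 9).symm
  have hm1 : ((-1 : ZMod 9))^t = (-1)^(t % 2) := by
    conv_lhs => rw [← Nat.div_add_mod t 2]
    rw [pow_add, pow_mul]
    norm_num
  have h4 : (4 : ZMod 9)^o1 = 4^(o1 % 3) := by
    conv_lhs => rw [← Nat.div_add_mod o1 3]
    rw [pow_add, pow_mul, show ((4:ZMod 9)^3) = 1 from by decide, one_pow, one_mul]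
  have h7 : (7 : ZMod 9)^o2 = 7^(o2 % 3) := by
    conv_lhs => rw [← Nat.div_add_mod o2 3]
    rw [pow_add, pow_mul, show ((7:ZMod 9)^3) = 1 from by decide, one_pow, one_mul]
  rw [hm1, h4, h7] at hx
  have hz : ((o1 : ℤ) - (o2 : ℤ)) % 3 = (((o1 % 3 + 3 - o2 % 3) % 3 : ℕ) : ℤ) := by omega
  have hev : Even t ↔ t % 2 = 0 := Nat.even_iff
  have hod : Odd t ↔ t % 2 = 1 := Nat.odd_iff
  have ht : t % 2 = 0 ∨ t % 2 = 1 := by omega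
  have ho1 : o1 % 3 = 0 ∨ o1 % 3 = 1 ∨ o1 % 3 = 2 := by omega
  have ho2 : o2 % 3 = 0 ∨ o2 % 3 = 1 ∨ o2 % 3 = 2 := by omega
  rcases ht with h1|h1 <;> rcases ho1 with h2|h2|h2 <;> rcases ho2 with h3|h3|h3 <;>
    rw [h1, h2, h3] at hx <;>
    simp only [modiff, hx, hz, hev, hod, h1, h2, h3] <;>
    decide

end AperyAux

/-- Apéry numbers mod 9 for `r ≡ 0 (mod 3)`, `s ≡ 4 (mod 6)`. -/
theorem apery_mod_nine_r0_s4 (r s : ℕ) (hr : 0 < r) (hs : 0 < s)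
    (hr3 : r % 3 = 0) (hs6 : s % 6 = 4)
    (n m : ℕ) (d : ℕ → ℕ) (hd2 : ∀ i, d i ≤ 2) (hd0 : ∀ i, m < i → d i = 0)
    (hn : n = ∑ i ∈ Finset.range (m + 1), d i * 3 ^ i) :
    (apery r s n ≡ 1 [MOD 9] ↔ Even (digitCount d m 1) ∧
      ((occ d m 1 1 : ℤ) - (occ d m 2 1 : ℤ)) % 3 = 0) ∧
    (apery r s n ≡ 4 [MOD 9] ↔ Even (digitCount d m 1) ∧
      ((occ d m 1 1 : ℤ) - (occ d m 2 1 : ℤ)) % 3 = 1) ∧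
    (apery r s n ≡ 7 [MOD 9] ↔ Even (digitCount d m 1) ∧
      ((occ d m 1 1 : ℤ) - (occ d m 2 1 : ℤ)) % 3 = 2) ∧
    (apery r s n ≡ 8 [MOD 9] ↔ Odd (digitCount d m 1) ∧
      ((occ d m 1 1 : ℤ) - (occ d m 2 1 : ℤ)) % 3 = 0) ∧
    (apery r s n ≡ 5 [MOD 9] ↔ Odd (digitCount d m 1) ∧
      ((occ d m 1 1 : ℤ) - (occ d m 2 1 : ℤ)) % 3 = 1) ∧
    (apery r s n ≡ 2 [MOD 9] ↔ Odd (digitCount d m 1) ∧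
      ((occ d m 1 1 : ℤ) - (occ d m 2 1 : ℤ)) % 3 = 2) ∧
    ¬ (apery r s n ≡ 3 [MOD 9]) ∧
    ¬ (apery r s n ≡ 6 [MOD 9]) := by
  have hx : ((apery r s n : ℕ) : ZMod 9)
      = (-1)^(digitCount d m 1) * 4^(occ d m 1 1) * 7^(occ d m 2 1) := by
    rw [hn]
    exact AperyAux.main hr hr3 hs6 m d hd2 hd0
  exact AperyAux.endgame _ _ _ _ hx
end

section
/- Let r and s be positive integers with r \equiv 2 (mod 3) and s \equiv 2 (mod 6) (in particular this covers the classical Apéry numbers a_n(2,2)). For a nonnegative integer n, let t be the number of digits equal to 1 in the 3-adic expansion of n. Then: a_n(r,s) \equiv 1 (mod 9) iff t \equiv 0 (mod 6); a_n(r,s) \equiv 5 (mod 9) iff t \equiv 1 (mod 6); a_n(r,s) \equiv 7 (mod 9) iff t \equiv 2 (mod 6); a_n(r,s) \equiv 8 (mod 9) iff t \equiv 3 (mod 6); a_n(r,s) \equiv 4 (mod 9) iff t \equiv 4 (mod 6); a_n(r,s) \equiv 2 (mod 9) iff t \equiv 5 (mod 6); and a_n(r,s) is never \equiv 3 or 6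 (mod 9). -/
open Finset

section aux
open Nat
/-- Product of integers in `[1,n]` not divisible by 3. -/
def F3 (n : ℕ) : ℕ := ∏ i ∈ Finset.range n, if (i+1) % 3 = 0 then 1 else i+1

lemma F3_pos (n : ℕ) : 0 < F3 n := by
  apply Finset.prod_pos
  intro i _
  split <;> omega

lemma fact3 (n : ℕ) : n ! = 3 ^ (n/3) * (n/3)! * F3 n := by
  induction n with
  | zero => simp [F3]
  | succ n ih =>
    rw [Nat.factorial_succ, ih, show F3 (n+1) = F3 n * (if (n+1) % 3 = 0 then 1 else n+1) from Finset.prod_range_succ _ n]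
    rcases (show n % 3 = 0 ∨ n % 3 = 1 ∨ n % 3 = 2 by omega) with h | h | h
    · have h1 : (n+1) % 3 = 1 := by omega
      have h2 : (n+1)/3 = n/3 := by omega
      rw [h1, h2]; ring_nf; simp; ring
    · have h1 : (n+1) % 3 = 2 := by omega
      have h2 : (n+1)/3 = n/3 := by omega
      rw [h1, h2]; ring_nf; simp; ring
    · have h1 : (n+1) % 3 = 0 := by omega
      have h2 : (n+1)/3 = n/3 + 1 := by omega
      rw [h1, h2, if_pos rfl, Nat.factorial_succ, show n+1 = 3*(n/3+1) by omega]
      ring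

lemma choose_mul_F3 {n k : ℕ} (h : k ≤ n) (h3 : k % 3 ≤ n % 3) :
    n.choose k * F3 k * F3 (n - k) = (n/3).choose (k/3) * F3 n := by
  have key := Nat.choose_mul_factorial_mul_factorial h
  rw [fact3 n, fact3 k, fact3 (n-k)] at key
  have e1 : (n-k)/3 = n/3 - k/3 := by omega
  have e2 : k/3 + (n-k)/3 = n/3 := by omega
  have hk3 : k/3 ≤ n/3 := by omega
  have key2 : (n.choose k * F3 k * F3 (n-k)) * ((k/3)! * ((n-k)/3)!) * 3 ^ (n/3)
      = ((n/3).choose (k/3) * F3 n) * ((k/3)! * ((n-k)/3)!) * 3 ^ (n/3) := by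
    calc (n.choose k * F3 k * F3 (n-k)) * ((k/3)! * ((n-k)/3)!) * 3 ^ (n/3)
        = n.choose k * (3 ^ (k/3) * (k/3)! * F3 k) * (3 ^ ((n-k)/3) * ((n-k)/3)! * F3 (n-k)) := by
          rw [← e2, pow_add]; ring
      _ = 3 ^ (n/3) * (n/3)! * F3 n := key
      _ = 3 ^ (n/3) * ((n/3).choose (k/3) * (k/3)! * ((n/3) - (k/3))!) * F3 n := by
          rw [Nat.choose_mul_factorial_mul_factorial hk3]
      _ = ((n/3).choose (k/3) * F3 n) * ((k/3)! * ((n-k)/3)!) * 3 ^ (n/3) := by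
          rw [e1]; ring
  have hpos : 0 < (k/3)! * ((n-k)/3)! * 3 ^ (n/3) :=
    Nat.mul_pos (Nat.mul_pos (Nat.factorial_pos _) (Nat.factorial_pos _)) (Nat.pow_pos (by norm_num))
  exact Nat.eq_of_mul_eq_mul_right hpos (by linarith [key2])

/-- digit factor for `F3` mod 9. -/
def gg (n : ℕ) : ZMod 9 :=
  if n % 3 = 0 then 1 else if n % 3 = 1 then 1 + 3*(n/3 : ℕ) else 2

def gginv (n : ℕ) : ZMod 9 :=
  if n % 3 = 0 then 1 else if n % 3 = 1 then 1 + 6*(n/3 : ℕ) else 5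

lemma h9 : (9 : ZMod 9) = 0 := by decide

lemma gg_mul_gginv (n : ℕ) : gg n * gginv n = 1 := by
  unfold gg gginv
  rcases (show n % 3 = 0 ∨ n % 3 = 1 ∨ n % 3 = 2 by omega) with h | h | h <;> simp [h]
  · linear_combination (((n/3 : ℕ) : ZMod 9) + 2*((n/3:ℕ):ZMod 9)^2) * h9
  · decide

lemma F3_zmod (n : ℕ) : (F3 n : ZMod 9) = 2 ^ (n/3) * gg n := by
  induction n with
  | zero => simp [F3, gg]
  | succ n ih =>
    rw [show F3 (n+1) = F3 n * (if (n+1) % 3 = 0 then 1 else n+1) from Finset.prod_range_succ _ n]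
    rcases (show n % 3 = 0 ∨ n % 3 = 1 ∨ n % 3 = 2 by omega) with h | h | h
    · have h1 : (n+1) % 3 = 1 := by omega
      have h2 : (n+1)/3 = n/3 := by omega
      rw [if_neg (by omega)]
      simp only [h2]
      push_cast [ih]
      rw [show gg n = 1 by simp [gg, h], show gg (n+1) = 1 + 3*(n/3 : ℕ) by
        simp [gg, h1, h2]]
      have h4 : (n : ZMod 9) = 3*((n/3 : ℕ) : ZMod 9) := by
        conv_lhs => rw [show n = 3*(n/3) by omega]
        push_cast; ring
      rw [h4]; ring
    · have h1 : (n+1) % 3 = 2 := by omega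
      have h2 : (n+1)/3 = n/3 := by omega
      rw [if_neg (by omega)]
      simp only [h2]
      push_cast [ih]
      rw [show gg n = 1 + 3*(n/3 : ℕ) by simp [gg, h], show gg (n+1) = 2 by simp [gg, h1, h2]]
      have h4 : (n : ZMod 9) = 3*((n/3 : ℕ) : ZMod 9) + 1 := by
        conv_lhs => rw [show n = 3*(n/3)+1 by omega]
        push_cast; ring
      rw [h4]
      linear_combination (2^(n/3) * (((n/3:ℕ):ZMod 9) + ((n/3:ℕ):ZMod 9)^2)) * h9
    · have h1 : (n+1) % 3 = 0 := by omega
      have h2 : (n+1)/3 = n/3 + 1 := by omega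
      rw [if_pos h1]
      push_cast [ih]
      rw [show gg n = 2 by simp [gg, h], show gg (n+1) = 1 by simp [gg, h1], h2]
      ring

lemma F3_unit (n : ℕ) : (F3 n : ZMod 9) * (5 ^ (n/3) * gginv n) = 1 := by
  rw [F3_zmod]
  have h25 : (2:ZMod 9) * 5 = 1 := by decide
  calc 2 ^ (n/3) * gg n * (5 ^ (n/3) * gginv n)
      = ((2:ZMod 9)*5)^(n/3) * (gg n * gginv n) := by rw [mul_pow]; ring
    _ = 1 := by rw [h25, gg_mul_gginv, one_pow, one_mul]

lemma F3_mul_pow (n : ℕ) : (F3 n : ZMod 9) * 5 ^ (n/3) = gg n := by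
  calc (F3 n : ZMod 9) * 5 ^ (n/3)
      = (F3 n : ZMod 9) * 5 ^ (n/3) * (gg n * gginv n) := by rw [gg_mul_gginv, mul_one]
    _ = ((F3 n : ZMod 9) * (5 ^ (n/3) * gginv n)) * gg n := by ring
    _ = gg n := by rw [F3_unit, one_mul]

lemma choose_zmod9 {n k : ℕ} (h : k ≤ n) (h3 : k % 3 ≤ n % 3) :
    (n.choose k : ZMod 9) = (n/3).choose (k/3) * gg n * gginv k * gginv (n - k) := by
  have key := congrArg (fun x : ℕ => (x : ZMod 9)) (choose_mul_F3 h h3)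
  push_cast at key
  have e2 : k/3 + (n-k)/3 = n/3 := by omega
  calc (n.choose k : ZMod 9)
      = (n.choose k) * ((F3 k : ZMod 9) * (5 ^ (k/3) * gginv k))
        * ((F3 (n-k) : ZMod 9) * (5 ^ ((n-k)/3) * gginv (n-k))) := by
        rw [F3_unit, F3_unit]; ring
    _ = ((n.choose k : ZMod 9) * F3 k * F3 (n-k)) * (5 ^ (k/3) * 5 ^ ((n-k)/3))
        * (gginv k * gginv (n-k)) := by ring
    _ = ((n/3).choose (k/3) * F3 n) * (5 ^ (n/3)) * (gginv k * gginv (n-k)) := by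
        rw [key, ← pow_add, e2]
    _ = (n/3).choose (k/3) * ((F3 n : ZMod 9) * 5 ^ (n/3)) * gginv k * gginv (n-k) := by ring
    _ = (n/3).choose (k/3) * gg n * gginv k * gginv (n - k) := by rw [F3_mul_pow]

lemma gg0 (m : ℕ) : gg (3*m) = 1 := by simp [gg, Nat.mul_mod_right]
lemma gg1 (m : ℕ) : gg (3*m+1) = 1 + 3*(m : ZMod 9) := by
  have : (3*m+1) % 3 = 1 := by omega
  have h2 : (3*m+1) / 3 = m := by omega
  simp [gg, this, h2]
lemma gg2 (m : ℕ) : gg (3*m+2) = 2 := by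
  have : (3*m+2) % 3 = 2 := by omega
  simp [gg, this]
lemma gginv0 (m : ℕ) : gginv (3*m) = 1 := by simp [gginv, Nat.mul_mod_right]
lemma gginv1 (m : ℕ) : gginv (3*m+1) = 1 + 6*(m : ZMod 9) := by
  have : (3*m+1) % 3 = 1 := by omega
  have h2 : (3*m+1) / 3 = m := by omega
  simp [gginv, this, h2]
lemma gginv2 (m : ℕ) : gginv (3*m+2) = 5 := by
  have : (3*m+2) % 3 = 2 := by omega
  simp [gginv, this]

/-- The key binomial congruence mod 9 for digitwise addition at the lowest digit. -/
lemma choose3 {q l : ℕ} (j i : ℕ) (hl : l ≤ q) (hij : i ≤ j) (hj : j ≤ 2) :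
    ((3*q+j).choose (3*l+i) : ZMod 9)
      = q.choose l * gg (3*q+j) * gginv (3*l+i) * gginv (3*(q-l)+(j-i)) := by
  have h : 3*l+i ≤ 3*q+j := by omega
  have h3 : (3*l+i) % 3 ≤ (3*q+j) % 3 := by omega
  have := choose_zmod9 h h3
  rw [show (3*q+j)/3 = q by omega, show (3*l+i)/3 = l by omega,
    show (3*q+j) - (3*l+i) = 3*(q-l)+(j-i) by omega] at this
  exact this

lemma three_dvd_choose1 (a b : ℕ) : 3 ∣ (3*a).choose (3*b+1) := by
  rcases Nat.eq_zero_or_pos a with rfl | ha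
  · simp
  have key : (3*a) * (3*a-1).choose (3*b) = (3*a).choose (3*b+1) * (3*b+1) := by
    have := Nat.add_one_mul_choose_eq (3*a-1) (3*b)
    rwa [show 3*a-1+1 = 3*a by omega] at this
  have h3 : 3 ∣ (3*a).choose (3*b+1) * (3*b+1) := ⟨a * (3*a-1).choose (3*b), by rw [← key]; ring⟩
  exact Nat.Coprime.dvd_of_dvd_mul_right
    ((Nat.prime_three.coprime_iff_not_dvd).mpr (by omega)) h3

lemma three_dvd_choose2 (a b : ℕ) : 3 ∣ (3*a).choose (3*b+2) := by
  rcases Nat.eq_zero_or_pos a with rfl | ha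
  · simp
  have key : (3*a) * (3*a-1).choose (3*b+1) = (3*a).choose (3*b+2) * (3*b+2) := by
    have := Nat.add_one_mul_choose_eq (3*a-1) (3*b+1)
    rwa [show 3*a-1+1 = 3*a by omega] at this
  have h3 : 3 ∣ (3*a).choose (3*b+2) * (3*b+2) :=
    ⟨a * (3*a-1).choose (3*b+1), by rw [← key]; ring⟩
  exact Nat.Coprime.dvd_of_dvd_mul_right
    ((Nat.prime_three.coprime_iff_not_dvd).mpr (by omega)) h3

lemma three_dvd_choose3 (a b : ℕ) : 3 ∣ (3*a+1).choose (3*b+2) := by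
  have key := Nat.add_one_mul_choose_eq (3*a) (3*b+1)
  have h3 : 3 ∣ (3*a+1).choose (3*b+2) * (3*b+2) := by
    rw [show 3*b+1+1 = 3*b+2 from rfl] at key
    rw [← key]
    exact Dvd.dvd.mul_left (three_dvd_choose1 a b) _
  exact Nat.Coprime.dvd_of_dvd_mul_right
    ((Nat.prime_three.coprime_iff_not_dvd).mpr (by omega)) h3

/-- if `3 ∣ a` and `2 ≤ r` then `a^r = 0` in `ZMod 9`. -/
lemma pow_eq_zero_zmod9 {a r : ℕ} (h : 3 ∣ a) (hr : 2 ≤ r) : (a : ZMod 9) ^ r = 0 := by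
  obtain ⟨c, rfl⟩ := h
  have h2 : ((3*c : ℕ) : ZMod 9) ^ 2 = 0 := by
    push_cast
    linear_combination ((c : ZMod 9)^2) * h9
  calc ((3*c : ℕ) : ZMod 9) ^ r = ((3*c : ℕ) : ZMod 9)^2 * ((3*c : ℕ) : ZMod 9)^(r-2) := by
        rw [← pow_add]; congr 1; omega
    _ = 0 := by rw [h2, zero_mul]

lemma pow_one_add_three (x : ZMod 9) (r : ℕ) : (1 + 3*x)^r = 1 + 3*(r : ZMod 9)*x := by
  induction r with
  | zero => simp
  | succ r ih =>
    rw [pow_succ, ih]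
    push_cast
    linear_combination ((r:ZMod 9)*x^2) * h9

lemma three_mul_cast {r : ℕ} (h : r % 3 = 2) : (3 : ZMod 9) * (r : ℕ) = 6 := by
  conv_lhs => rw [show r = 3*(r/3) + 2 by omega]
  push_cast
  linear_combination ((r/3 : ℕ) : ZMod 9) * h9

lemma two_pow_s {s : ℕ} (h : s % 6 = 2) : (2 : ZMod 9) ^ s = 4 := by
  conv_lhs => rw [show s = 6*(s/6) + 2 by omega]
  rw [pow_add, pow_mul, show (2:ZMod 9)^6 = 1 by decide, one_pow]
  decide

lemma unit_pow (x y : ZMod 9) (r : ℕ) (h3r : (3 : ZMod 9) * (r : ℕ) = 6) :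
    (x * (1+3*y))^r = x^r * (1+6*y) := by
  rw [mul_pow, pow_one_add_three]
  rw [show (3:ZMod 9)*(r:ℕ)*y = ((3:ZMod 9)*(r:ℕ))*y by ring, h3r]

lemma unit_pow2 (x y : ZMod 9) (s : ℕ) (h3s : (3 : ZMod 9) * (s : ℕ) = 6)
    (h2s : (2 : ZMod 9)^s = 4) :
    (x * (1+3*y) * 2)^s = x^s * (1+6*y) * 4 := by
  rw [mul_pow, mul_pow, pow_one_add_three, h2s]
  rw [show (3:ZMod 9)*(s:ℕ)*y = ((3:ZMod 9)*(s:ℕ))*y by ring, h3s]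

lemma h00 {q l : ℕ} (hl : l ≤ q) : ((3*q).choose (3*l) : ZMod 9) = q.choose l := by
  have := choose3 (q := q) (l := l) 0 0 hl le_rfl (by norm_num)
  simpa [gg0, gginv0] using this

lemma hA1 {q l : ℕ} (hl : l ≤ q) :
    ((3*q+1).choose (3*l) : ZMod 9) = q.choose l * (1+3*(l : ZMod 9)) := by
  have := choose3 (q := q) (l := l) 1 0 hl (by norm_num) (by norm_num)
  simp only [add_zero, Nat.sub_zero] at this
  rw [this, gg1, gginv0, gginv1, Nat.cast_sub hl]
  linear_combination (↑(q.choose l) * ((q:ZMod 9) - l + 2*(q:ZMod 9)^2 - 2*(q:ZMod 9)*l)) * h9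

lemma hB1 {q l : ℕ} :
    ((3*(q+l)+1).choose (3*l) : ZMod 9) = (q+l).choose l * (1+3*(l : ZMod 9)) := by
  have := choose3 (q := q+l) (l := l) 1 0 (Nat.le_add_left l q) (by norm_num) (by norm_num)
  simp only [add_zero, Nat.sub_zero, Nat.add_sub_cancel] at this
  rw [this, gg1, gginv0, gginv1]
  push_cast
  linear_combination (↑((q+l).choose l) * ((q:ZMod 9) + 2*(q:ZMod 9)^2 + 2*(q:ZMod 9)*l)) * h9

lemma hA2 {q l : ℕ} (hl : l ≤ q) :
    ((3*q+1).choose (3*l+1) : ZMod 9) = q.choose l * (1+3*((q : ZMod 9) + 2*l)) := by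
  have := choose3 (q := q) (l := l) 1 1 hl le_rfl (by norm_num)
  simp only [Nat.sub_self, add_zero] at this
  rw [this, gg1, gginv1, gginv0]
  linear_combination (↑(q.choose l) * (2*(q:ZMod 9)*l)) * h9

lemma hB2 {q l : ℕ} :
    ((3*(q+l)+2).choose (3*l+1) : ZMod 9)
      = (q+l).choose l * (1+3*(2*(q : ZMod 9) + 2*l)) * 2 := by
  have := choose3 (q := q+l) (l := l) 2 1 (Nat.le_add_left l q) (by norm_num) (by norm_num)
  simp only [Nat.add_sub_cancel] at this
  rw [this, gg2, gginv1, show (2-1 : ℕ) = 1 from rfl, gginv1]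
  linear_combination (↑((q+l).choose l) * (8*(q:ZMod 9)*l)) * h9

lemma hC0 {q l : ℕ} (hl : l ≤ q) : ((3*q+2).choose (3*l) : ZMod 9) = q.choose l := by
  have := choose3 (q := q) (l := l) 2 0 hl (by norm_num) (by norm_num)
  simp only [add_zero, Nat.sub_zero] at this
  rw [this, gg2, gginv0, gginv2]
  linear_combination (↑(q.choose l)) * h9

lemma sum_range_three_mul {M : Type*} [AddCommMonoid M] (f : ℕ → M) (m : ℕ) :
    ∑ k ∈ Finset.range (3*m), f k = ∑ l ∈ Finset.range m, (f (3*l) + f (3*l+1) + f (3*l+2)) := by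
  induction m with
  | zero => simp
  | succ m ih =>
    rw [show 3*(m+1) = (3*m)+1+1+1 by ring, Finset.sum_range_succ, Finset.sum_range_succ,
      Finset.sum_range_succ, ih, Finset.sum_range_succ]
    abel

lemma apery_cast_sum {r s : ℕ} (hr : 0 < r) (j q : ℕ) (hj : j ≤ 2) :
    (apery r s (3*q+j) : ZMod 9) = ∑ l ∈ Finset.range (q+1),
      (((3*q+j).choose (3*l) : ZMod 9)^r * (((3*q+j)+3*l).choose (3*l) : ZMod 9)^s
       + ((3*q+j).choose (3*l+1) : ZMod 9)^r * (((3*q+j)+(3*l+1)).choose (3*l+1) : ZMod 9)^s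
       + ((3*q+j).choose (3*l+2) : ZMod 9)^r * (((3*q+j)+(3*l+2)).choose (3*l+2) : ZMod 9)^s) := by
  have hext : apery r s (3*q+j)
      = ∑ k ∈ Finset.range (3*(q+1)), (3*q+j).choose k ^ r * ((3*q+j) + k).choose k ^ s := by
    rw [apery]
    apply Finset.sum_subset
    · intro x hx
      simp only [Finset.mem_range] at *
      omega
    · intro x hx hnx
      simp only [Finset.mem_range] at *
      rw [Nat.choose_eq_zero_of_lt (by omega), zero_pow (by omega), zero_mul]
  rw [hext, sum_range_three_mul]
  push_cast
  rfl

section steps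
variable {r s : ℕ}

lemma apery_step0 (hr3 : r % 3 = 2) (hs6 : s % 6 = 2) (q : ℕ) :
    (apery r s (3*q) : ZMod 9) = apery r s q := by
  have hr : 0 < r := by omega
  have hr2 : 2 ≤ r := by omega
  have hs2 : 2 ≤ s := by omega
  have h := apery_cast_sum (s := s) hr 0 q (by norm_num)
  simp only [add_zero] at h
  rw [h, apery]
  push_cast
  apply Finset.sum_congr rfl
  intro l hlm
  have hl : l ≤ q := by simpa using Nat.lt_succ_iff.mp (Finset.mem_range.mp hlm)
  rw [show 3*q+3*l = 3*(q+l) by ring]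
  rw [pow_eq_zero_zmod9 (three_dvd_choose1 q l) hr2, zero_mul, add_zero]
  rw [pow_eq_zero_zmod9 (three_dvd_choose2 q l) hr2, zero_mul, add_zero]
  rw [h00 hl, h00 (Nat.le_add_left l q)]

lemma apery_step2 (hr3 : r % 3 = 2) (hs6 : s % 6 = 2) (q : ℕ) :
    (apery r s (3*q+2) : ZMod 9) = apery r s q := by
  have hr : 0 < r := by omega
  have hr2 : 2 ≤ r := by omega
  have hs2 : 2 ≤ s := by omega
  rw [apery_cast_sum (s := s) hr 2 q (by norm_num), apery]
  push_cast
  apply Finset.sum_congr rfl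
  intro l hlm
  have hl : l ≤ q := by simpa using Nat.lt_succ_iff.mp (Finset.mem_range.mp hlm)
  rw [show 3*q+2+3*l = 3*(q+l)+2 by ring, show 3*q+2+(3*l+1) = 3*(q+l+1) by ring,
    show 3*q+2+(3*l+2) = 3*(q+l+1)+1 by ring]
  rw [pow_eq_zero_zmod9 (three_dvd_choose1 (q+l+1) l) hs2, mul_zero, add_zero]
  rw [pow_eq_zero_zmod9 (three_dvd_choose3 (q+l+1) l) hs2, mul_zero, add_zero]
  rw [hC0 hl, hC0 (Nat.le_add_left l q)]

lemma apery_step1 (hr3 : r % 3 = 2) (hs6 : s % 6 = 2) (q : ℕ) :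
    (apery r s (3*q+1) : ZMod 9) = 5 * apery r s q := by
  have hr : 0 < r := by omega
  have hr2 : 2 ≤ r := by omega
  have hs2 : 2 ≤ s := by omega
  have h3r : (3 : ZMod 9) * (r : ℕ) = 6 := three_mul_cast hr3
  have h3s : (3 : ZMod 9) * (s : ℕ) = 6 := three_mul_cast (by omega)
  have h2s : (2 : ZMod 9)^s = 4 := two_pow_s hs6
  rw [apery_cast_sum (s := s) hr 1 q (by norm_num), apery]
  push_cast
  rw [Finset.mul_sum]
  apply Finset.sum_congr rfl
  intro l hlm
  have hl : l ≤ q := by simpa using Nat.lt_succ_iff.mp (Finset.mem_range.mp hlm)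
  rw [show 3*q+1+3*l = 3*(q+l)+1 by ring, show 3*q+1+(3*l+1) = 3*(q+l)+2 by ring]
  rw [pow_eq_zero_zmod9 (three_dvd_choose3 q l) hr2, zero_mul, add_zero]
  rw [hA1 hl, hB1, hA2 hl, hB2]
  rw [unit_pow _ _ r h3r, unit_pow _ _ r h3r, unit_pow _ _ s h3s, unit_pow2 _ _ s h3s h2s]
  linear_combination ((↑(q.choose l) : ZMod 9)^r * (↑((q+l).choose l) : ZMod 9)^s *
    (8*(q:ZMod 9) + 12*(l:ZMod 9) + 32*(q:ZMod 9)^2 + 96*(q:ZMod 9)*(l:ZMod 9)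
      + 68*(l:ZMod 9)^2)) * h9

end steps
section final
variable {r s : ℕ}

lemma apery_zero : apery r s 0 = 1 := by simp [apery]

lemma apery_one_cast (hs6 : s % 6 = 2) : (apery r s 1 : ZMod 9) = 5 := by
  have : apery r s 1 = 1 + 2^s := by
    simp [apery, Finset.sum_range_succ, Nat.choose_self, Nat.choose_zero_right]
  rw [this]
  push_cast
  rw [two_pow_s hs6]
  decide

lemma apery_two_cast (hs6 : s % 6 = 2) : (apery r s 2 : ZMod 9) = 1 := by
  have hs2 : 2 ≤ s := by omega
  have : apery r s 2 = 1 + 2^r * 3^s + 6^s := by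
    simp [apery, Finset.sum_range_succ]
    norm_num [Nat.choose_one_right, show Nat.choose 4 2 = 6 by decide]
  rw [this]
  push_cast
  have h3 : ((3 : ℕ) : ZMod 9)^s = 0 := pow_eq_zero_zmod9 ⟨1, rfl⟩ hs2
  have h6 : ((6 : ℕ) : ZMod 9)^s = 0 := pow_eq_zero_zmod9 ⟨2, rfl⟩ hs2
  push_cast at h3 h6
  rw [h3, h6]
  ring

lemma apery_digits (hr3 : r % 3 = 2) (hs6 : s % 6 = 2) :
    ∀ (m : ℕ) (d : ℕ → ℕ), (∀ i, d i ≤ 2) →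
    (apery r s (∑ i ∈ Finset.range (m+1), d i * 3^i) : ZMod 9) = 5 ^ (digitCount d m 1) := by
  intro m
  induction m with
  | zero =>
    intro d hd
    have h0 : ∑ i ∈ Finset.range 1, d i * 3^i = d 0 := by simp
    have hc : digitCount d 0 1 = if d 0 = 1 then 1 else 0 := by
      simp [digitCount, Finset.filter_singleton, Finset.range_one]
      split <;> simp_all
    rw [h0, hc]
    rcases (show d 0 = 0 ∨ d 0 = 1 ∨ d 0 = 2 by have := hd 0; omega) with h | h | h <;> rw [h]
    · rw [apery_zero]; norm_num
    · rw [apery_one_cast hs6]; norm_num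
    · rw [apery_two_cast hs6]; norm_num
  | succ m ih =>
    intro d hd
    set q := ∑ i ∈ Finset.range (m+1), d (i+1) * 3^i with hq
    have hsum : ∑ i ∈ Finset.range (m+1+1), d i * 3^i = 3*q + d 0 := by
      rw [Finset.sum_range_succ']
      simp only [pow_zero, mul_one]
      congr 1
      rw [hq, Finset.mul_sum]
      apply Finset.sum_congr rfl
      intro i _
      rw [pow_succ]
      ring
    have hcount : digitCount d (m+1) 1
        = digitCount (fun i => d (i+1)) m 1 + (if d 0 = 1 then 1 else 0) := by
      unfold digitCount
      rw [Finset.card_filter, Finset.card_filter, Finset.sum_range_succ']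
    have ihq := ih (fun i => d (i+1)) (fun i => hd (i+1))
    rw [hsum, hcount]
    rcases (show d 0 = 0 ∨ d 0 = 1 ∨ d 0 = 2 by have := hd 0; omega) with h | h | h <;> rw [h]
    · rw [add_zero, apery_step0 hr3 hs6, ihq]
      norm_num
    · rw [apery_step1 hr3 hs6, ihq]
      norm_num [pow_succ]
      ring
    · rw [apery_step2 hr3 hs6, ihq]
      norm_num

end final

end aux

/-- Apéry numbers mod 9 for `r ≡ 2 (mod 3)`, `s ≡ 2 (mod 6)`. -/
theorem apery_mod_nine_r2_s2 (r s : ℕ) (hr : 0 < r) (hs : 0 < s) (hr3 : r % 3 = 2) (hs6 : s % 6 = 2)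
    (n m : ℕ) (d : ℕ → ℕ) (hd2 : ∀ i, d i ≤ 2) (hd0 : ∀ i, m < i → d i = 0)
    (hn : n = ∑ i ∈ Finset.range (m + 1), d i * 3 ^ i) :
    (apery r s n ≡ 1 [MOD 9] ↔ digitCount d m 1 % 6 = 0) ∧
    (apery r s n ≡ 5 [MOD 9] ↔ digitCount d m 1 % 6 = 1) ∧
    (apery r s n ≡ 7 [MOD 9] ↔ digitCount d m 1 % 6 = 2) ∧
    (apery r s n ≡ 8 [MOD 9] ↔ digitCount d m 1 % 6 = 3) ∧
    (apery r s n ≡ 4 [MOD 9] ↔ digitCount d m 1 % 6 = 4) ∧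
    (apery r s n ≡ 2 [MOD 9] ↔ digitCount d m 1 % 6 = 5) ∧
    ¬ (apery r s n ≡ 3 [MOD 9]) ∧
    ¬ (apery r s n ≡ 6 [MOD 9]) := by
  set t := digitCount d m 1 with ht
  have key : (apery r s n : ZMod 9) = 5 ^ t := by
    rw [hn]; exact apery_digits hr3 hs6 m d hd2
  have key6 : (apery r s n : ZMod 9) = 5 ^ (t % 6) := by
    rw [key]
    conv_lhs => rw [show t = 6*(t/6) + t % 6 by omega]
    rw [pow_add, pow_mul, show (5:ZMod 9)^6 = 1 by decide, one_pow, one_mul]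
  have hmod : ∀ c : ℕ, (apery r s n ≡ c [MOD 9]) ↔ (5 : ZMod 9) ^ (t % 6) = (c : ZMod 9) := by
    intro c
    rw [← ZMod.natCast_eq_natCast_iff, key6]
  rcases (show t % 6 = 0 ∨ t % 6 = 1 ∨ t % 6 = 2 ∨ t % 6 = 3 ∨ t % 6 = 4 ∨ t % 6 = 5 by omega)
    with h | h | h | h | h | h <;>
  · simp only [hmod, h]
    norm_num
    try decide
end
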